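/- arXiv:1705.08886 — 5 statements merged into one kernel-verified Lean document; each statement's English description precedes it below -/
import Mathlib

section
/- Let (X,d) be a metric space and K : X → ℝ a continuous nonnegative function. For p ∈ X define the K-scale r_K(p) := sup{ r > 0 : K(y) ≤ r⁻² for every y ∈ X with d(p,y) < r } ∈ (0,∞]. Then exactly one of the following holds: either K ≡ 0 on X (and then r_K(p) = ∞ for every p), or r_K(p) is finite and positive for every p ∈ X and r_K is 1-Lipschitz, i.e. |r_K(p) − r_K(q)| ≤ d(p,q) for all p, q ∈ X. -/
open Metric
open scoped ENNReal

/-- The `K`-scale of a point `p`: the supremum (in `ℝ≥0∞`) of all radii `r > 0`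
such that `K ≤ r⁻²` on the open ball `B(p,r)`. -/
noncomputable def scaleK {X : Type*} [MetricSpace X] (K : X → ℝ) (p : X) : ℝ≥0∞ :=
  ⨆ (r : ℝ) (_ : 0 < r ∧ ∀ y : X, dist p y < r → K y ≤ (r ^ 2)⁻¹), ENNReal.ofReal r

lemma le_scaleK {X : Type*} [MetricSpace X] (K : X → ℝ) (p : X) {r : ℝ}
    (h : 0 < r ∧ ∀ y : X, dist p y < r → K y ≤ (r ^ 2)⁻¹) :
    ENNReal.ofReal r ≤ scaleK K p :=
  le_iSup₂ (f := fun (r : ℝ) (_ : 0 < r ∧ ∀ y : X, dist p y < r → K y ≤ (r ^ 2)⁻¹) =>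
    ENNReal.ofReal r) r h

lemma scaleK_le {X : Type*} [MetricSpace X] (K : X → ℝ) (p : X) {M : ℝ}
    (h : ∀ r : ℝ, (0 < r ∧ ∀ y : X, dist p y < r → K y ≤ (r ^ 2)⁻¹) → r ≤ M) :
    scaleK K p ≤ ENNReal.ofReal M :=
  iSup₂_le fun r hr => ENNReal.ofReal_le_ofReal (h r hr)

lemma scaleK_pos {X : Type*} [MetricSpace X] (K : X → ℝ) (hK0 : ∀ x, 0 ≤ K x)
    (hKc : Continuous K) (p : X) : 0 < scaleK K p := by
  obtain ⟨δ, hδ, hball⟩ := Metric.continuousAt_iff.mp (hKc.continuousAt (x := p)) 1 one_pos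
  set c : ℝ := K p + 1 with hc
  have hcpos : 0 < c := by have := hK0 p; simp only [hc]; linarith
  set r : ℝ := min δ (Real.sqrt c⁻¹) with hrdef
  have hrpos : 0 < r := lt_min hδ (Real.sqrt_pos.mpr (inv_pos.mpr hcpos))
  have hadm : 0 < r ∧ ∀ y : X, dist p y < r → K y ≤ (r ^ 2)⁻¹ := by
    refine ⟨hrpos, fun y hy => ?_⟩
    have h1 : dist (K y) (K p) < 1 := hball (by rw [dist_comm]; exact hy.trans_le (min_le_left _ _))
    have h2 : K y < c := by
      have := abs_lt.mp (by simpa [Real.dist_eq] using h1)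
      simp only [hc]; linarith [this.2]
    have hr2 : r ^ 2 ≤ c⁻¹ := by
      have h3 : r ≤ Real.sqrt c⁻¹ := min_le_right _ _
      nlinarith [Real.sq_sqrt (le_of_lt (inv_pos.mpr hcpos)), Real.sqrt_nonneg c⁻¹]
    have : c ≤ (r ^ 2)⁻¹ := by
      rw [← inv_inv c]
      exact inv_anti₀ (by positivity) hr2
    linarith
  calc (0 : ℝ≥0∞) < ENNReal.ofReal r := by simpa using hrpos
    _ ≤ scaleK K p := le_scaleK K p hadm

lemma scaleK_lt_top {X : Type*} [MetricSpace X] (K : X → ℝ) (hK0 : ∀ x, 0 ≤ K x)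
    {x : X} (hx : K x ≠ 0) (p : X) : scaleK K p < ⊤ := by
  have hxpos : 0 < K x := lt_of_le_of_ne (hK0 x) (Ne.symm hx)
  set M : ℝ := max (dist p x) (Real.sqrt (K x)⁻¹) with hM
  have hle : scaleK K p ≤ ENNReal.ofReal M := by
    apply scaleK_le
    rintro r ⟨hrpos, hball⟩
    by_contra hcon
    push_neg at hcon
    have h1 : dist p x < r := lt_of_le_of_lt (le_max_left _ _) hcon
    have h2 : Real.sqrt (K x)⁻¹ < r := lt_of_le_of_lt (le_max_right _ _) hcon
    have h3 : (K x)⁻¹ < r ^ 2 := by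
      nlinarith [Real.sq_sqrt (le_of_lt (inv_pos.mpr hxpos)), Real.sqrt_nonneg (K x)⁻¹]
    have h4 : (r ^ 2)⁻¹ < K x := by
      rw [← inv_inv (K x)]
      exact inv_strictAnti₀ (by positivity) h3
    exact absurd (hball x h1) (not_le.mpr h4)
  exact lt_of_le_of_lt hle ENNReal.ofReal_lt_top

lemma scaleK_le_add {X : Type*} [MetricSpace X] (K : X → ℝ) (p q : X) :
    scaleK K p ≤ scaleK K q + ENNReal.ofReal (dist p q) := by
  refine iSup₂_le fun r hr => ?_
  obtain ⟨hrpos, hball⟩ := hr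
  set d : ℝ := dist p q with hd
  have hd0 : 0 ≤ d := dist_nonneg
  rcases le_or_gt r d with h | h
  · calc ENNReal.ofReal r ≤ ENNReal.ofReal d := ENNReal.ofReal_le_ofReal h
      _ ≤ scaleK K q + ENNReal.ofReal d := le_add_self
  · have hadm : 0 < r - d ∧ ∀ y : X, dist q y < r - d → K y ≤ ((r - d) ^ 2)⁻¹ := by
      refine ⟨by linarith, fun y hy => ?_⟩
      have h1 : dist p y < r := by
        calc dist p y ≤ dist p q + dist q y := dist_triangle p q y
          _ < d + (r - d) := by rw [hd]; linarith
          _ = r := by ring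
      have h2 : (r ^ 2)⁻¹ ≤ ((r - d) ^ 2)⁻¹ := by
        apply inv_anti₀ (by nlinarith) (by nlinarith)
      exact le_trans (hball y h1) h2
    have : ENNReal.ofReal r = ENNReal.ofReal (r - d) + ENNReal.ofReal d := by
      rw [← ENNReal.ofReal_add (by linarith) hd0]
      norm_num
    rw [this]
    exact add_le_add (le_scaleK K q hadm) le_rfl

lemma scaleK_top_of_zero {X : Type*} [MetricSpace X] (K : X → ℝ)
    (h : ∀ x, K x = 0) (p : X) : scaleK K p = ⊤ := by
  apply ENNReal.eq_top_of_forall_nnreal_le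
  intro n
  have hadm : 0 < max (n : ℝ) 1 ∧ ∀ y : X, dist p y < max (n : ℝ) 1 →
      K y ≤ ((max (n : ℝ) 1) ^ 2)⁻¹ := by
    refine ⟨lt_of_lt_of_le one_pos (le_max_right _ _), fun y _ => ?_⟩
    rw [h y]
    positivity
  calc (n : ℝ≥0∞) = ENNReal.ofReal (n : ℝ) := by simp
    _ ≤ ENNReal.ofReal (max (n : ℝ) 1) := ENNReal.ofReal_le_ofReal (le_max_left _ _)
    _ ≤ scaleK K p := le_scaleK K p hadm

theorem scaleK_dichotomy {X : Type*} [MetricSpace X] (K : X → ℝ)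
    (hKc : Continuous K) (hK0 : ∀ x, 0 ≤ K x) :
    Xor'
      ((∀ x, K x = 0) ∧ ∀ p : X, scaleK K p = ⊤)
      ((¬ ∀ x, K x = 0) ∧ (∀ p : X, 0 < scaleK K p ∧ scaleK K p < ⊤) ∧
        ∀ p q : X, |(scaleK K p).toReal - (scaleK K q).toReal| ≤ dist p q) := by
  by_cases h : ∀ x, K x = 0
  · exact Or.inl ⟨⟨h, scaleK_top_of_zero K h⟩, fun h2 => h2.1 h⟩
  · push_neg at h
    obtain ⟨x, hx⟩ := h
    have hfin : ∀ p : X, 0 < scaleK K p ∧ scaleK K p < ⊤ :=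
      fun p => ⟨scaleK_pos K hK0 hKc p, scaleK_lt_top K hK0 hx p⟩
    have hlip : ∀ p q : X, (scaleK K p).toReal - (scaleK K q).toReal ≤ dist p q := by
      intro p q
      have h1 := scaleK_le_add K p q
      have h2 : (scaleK K p).toReal ≤ (scaleK K q).toReal + dist p q := by
        have := ENNReal.toReal_mono (by
          exact ENNReal.add_ne_top.mpr ⟨(hfin q).2.ne, ENNReal.ofReal_ne_top⟩) h1
        rwa [ENNReal.toReal_add (hfin q).2.ne ENNReal.ofReal_ne_top,
          ENNReal.toReal_ofReal dist_nonneg] at this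
      linarith
    refine Or.inr ⟨⟨fun hall => hx (hall x), hfin, fun p q => ?_⟩,
      fun h2 => hx (h2.1 x)⟩
    rw [abs_sub_le_iff]
    exact ⟨hlip p q, by rw [dist_comm]; exact hlip q p⟩
end

section
/- Let (X,d) be a metric space, l : X → ℝ a positive 1-Lipschitz scale function, and 0 < ζ < 1/4. Let p, q₁, q₂ ∈ X be such that B(q₁, 2ζ·l(q₁)) ∩ B(p, 2ζ·l(p)) ≠ ∅, B(q₂, 2ζ·l(q₂)) ∩ B(p, 2ζ·l(p)) ≠ ∅, and d(q₁, q₂) ≥ ζ·min(l(q₁), l(q₂)). Then, with ρ := (ζ(1−2ζ)/(2(1+2ζ)))·l(p), the balls B(q₁, ρ) and B(q₂, ρ) are disjoint. -/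
open Metric

theorem scale_ball_disjoint {X : Type*} [MetricSpace X] (l : X → ℝ)
    (hl_pos : ∀ x, 0 < l x) (hl_lip : ∀ x y, |l x - l y| ≤ dist x y)
    (ζ : ℝ) (hζ0 : 0 < ζ) (hζ : ζ < 1/4) (p q₁ q₂ : X)
    (h₁ : (ball q₁ (2 * ζ * l q₁) ∩ ball p (2 * ζ * l p)).Nonempty)
    (h₂ : (ball q₂ (2 * ζ * l q₂) ∩ ball p (2 * ζ * l p)).Nonempty)
    (hsep : ζ * min (l q₁) (l q₂) ≤ dist q₁ q₂) :
    Disjoint (ball q₁ ((ζ * (1 - 2 * ζ) / (2 * (1 + 2 * ζ))) * l p))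
      (ball q₂ ((ζ * (1 - 2 * ζ) / (2 * (1 + 2 * ζ))) * l p)) := by
  have key : ∀ q : X, (ball q (2 * ζ * l q) ∩ ball p (2 * ζ * l p)).Nonempty →
      (1 - 2 * ζ) / (1 + 2 * ζ) * l p ≤ l q := by
    intro q ⟨x, hxq, hxp⟩
    rw [mem_ball] at hxq hxp
    have hd : dist q p ≤ 2 * ζ * l q + 2 * ζ * l p := by
      calc dist q p ≤ dist x q + dist x p := dist_triangle_left _ _ _
        _ ≤ 2 * ζ * l q + 2 * ζ * l p := by linarith
    have hlip := (abs_le.mp (hl_lip p q)).2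
    have h1 : l p - l q ≤ 2 * ζ * l q + 2 * ζ * l p := by
      rw [dist_comm] at hd; linarith
    have hden : 0 < 1 + 2 * ζ := by linarith
    rw [div_mul_eq_mul_div, div_le_iff₀ hden]
    nlinarith
  have hb1 := key q₁ h₁
  have hb2 := key q₂ h₂
  apply ball_disjoint_ball
  have hmin : (1 - 2 * ζ) / (1 + 2 * ζ) * l p ≤ min (l q₁) (l q₂) :=
    le_min hb1 hb2
  have hlp := hl_pos p
  have hden : 0 < 1 + 2 * ζ := by linarith
  have : ζ * ((1 - 2 * ζ) / (1 + 2 * ζ) * l p) ≤ dist q₁ q₂ :=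
    le_trans (by nlinarith) hsep
  calc ζ * (1 - 2 * ζ) / (2 * (1 + 2 * ζ)) * l p + ζ * (1 - 2 * ζ) / (2 * (1 + 2 * ζ)) * l p
      = ζ * ((1 - 2 * ζ) / (1 + 2 * ζ) * l p) := by field_simp; ring
    _ ≤ dist q₁ q₂ := this
end

section
/- Work in 4-dimensional Euclidean space ℝ⁴ with Lebesgue measure, and set \barμ_R(r) := ∫_{B(0,r)} e^{R‖x‖} dx for R, r > 0, where B(0,r) is the open ball of radius r centered at the origin. Then for every R > 0 and every r with 0 < r ≤ R, one has \barμ_R(2r) ≤ 16·e^{R²}·\barμ_R(r). -/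
open Metric MeasureTheory Pointwise

/-- The weighted volume of the ball of radius `r` about the origin in the model space
`M⁴_R = (ℝ⁴, g_Euc, e^{R‖x‖} dx)`. -/
noncomputable def mubar (R r : ℝ) : ℝ :=
  ∫ x in ball (0 : EuclideanSpace ℝ (Fin 4)) r, Real.exp (R * ‖x‖)

lemma integrableOn_exp_ball (c r : ℝ) :
    IntegrableOn (fun x : EuclideanSpace ℝ (Fin 4) => Real.exp (c * ‖x‖))
      (ball (0 : EuclideanSpace ℝ (Fin 4)) r) := by
  have hcont : Continuous fun x : EuclideanSpace ℝ (Fin 4) => Real.exp (c * ‖x‖) :=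
    Real.continuous_exp.comp (continuous_const.mul continuous_norm)
  exact ((hcont.continuousOn).integrableOn_compact (isCompact_closedBall (0 : EuclideanSpace ℝ (Fin 4)) r)).mono_set
    ball_subset_closedBall

theorem mubar_doubling (R r : ℝ) (hR : 0 < R) (hr : 0 < r) (hrR : r ≤ R) :
    mubar R (2 * r) ≤ 16 * Real.exp (R ^ 2) * mubar R r := by
  have h2 : (0:ℝ) < 2 := by norm_num
  have hsmul : (2:ℝ) • ball (0 : EuclideanSpace ℝ (Fin 4)) r
      = ball (0 : EuclideanSpace ℝ (Fin 4)) (2 * r) := by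
    rw [smul_ball (by norm_num : (2:ℝ) ≠ 0) (0 : EuclideanSpace ℝ (Fin 4)) r]
    simp [Real.norm_ofNat]
  have hdim : Module.finrank ℝ (EuclideanSpace ℝ (Fin 4)) = 4 := by
    simp [finrank_euclideanSpace]
  have key := Measure.setIntegral_comp_smul_of_pos (volume : Measure (EuclideanSpace ℝ (Fin 4)))
    (fun x => Real.exp (R * ‖x‖)) (ball (0 : EuclideanSpace ℝ (Fin 4)) r) h2
  rw [hsmul, hdim] at key
  have key' : mubar R (2 * r)
      = 16 * ∫ x in ball (0 : EuclideanSpace ℝ (Fin 4)) r, Real.exp (R * ‖(2:ℝ) • x‖) := by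
    unfold mubar
    rw [key, smul_eq_mul]
    ring
  rw [key']
  have hbound : (∫ x in ball (0 : EuclideanSpace ℝ (Fin 4)) r, Real.exp (R * ‖(2:ℝ) • x‖))
      ≤ Real.exp (R ^ 2) * mubar R r := by
    unfold mubar
    rw [← integral_const_mul]
    apply setIntegral_mono_on
    · have : (fun x : EuclideanSpace ℝ (Fin 4) => Real.exp (R * ‖(2:ℝ) • x‖))
          = fun x : EuclideanSpace ℝ (Fin 4) => Real.exp ((2*R) * ‖x‖) := by
        funext x
        rw [norm_smul]
        norm_num
        ring_nf
      rw [this]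
      exact integrableOn_exp_ball (2*R) r
    · exact (integrableOn_exp_ball R r).const_mul _
    · exact measurableSet_ball
    · intro x hx
      rw [norm_smul, ← Real.exp_add]
      apply Real.exp_le_exp.mpr
      have hxr : ‖x‖ < r := by simpa using hx
      have : R * ‖x‖ ≤ R ^ 2 := by
        have := mul_le_mul hrR hxr.le (norm_nonneg x) (le_of_lt hR)
        nlinarith [norm_nonneg x]
      have hn2 : ‖(2:ℝ)‖ = 2 := by norm_num
      rw [hn2]
      nlinarith [norm_nonneg x]
  calc 16 * ∫ x in ball (0 : EuclideanSpace ℝ (Fin 4)) r, Real.exp (R * ‖(2:ℝ) • x‖)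
      ≤ 16 * (Real.exp (R ^ 2) * mubar R r) := by linarith
    _ = 16 * Real.exp (R ^ 2) * mubar R r := by ring
end

section
/- Let (X,d) be a metric space carrying a Borel measure μ such that every open ball has positive finite measure and μ(B(x,2r)) ≤ C_D·μ(B(x,r)) for all x ∈ X and r > 0, for some constant C_D ≥ 1. Fix s > 0 and α ∈ (0,1). For a μ-integrable function u : X → ℝ define the restricted maximal function M_u(x) := sup_{0 < s' ≤ s} (μ(B(x,s')))⁻¹ ∫_{B(x,s')} |u| dμ. Then there exists a constant C > 0, depending only on C_D and α, such that for every Borel set W ⊆ X with 0 < μ(W) < ∞, ((1/μ(W)) ∫_W M_u(x)^α dμ(x))^{1/α} ≤ (C/μ(W)) ∫_{B(W,6s)} |u| dμ, where B(W,6s) := {x ∈ X : d(x,w) < 6s for some w ∈ W} is the open 6s-neighborhood of W. -/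
open Metric MeasureTheory
open scoped ENNReal

/-- The maximal function of `u` restricted to scales at most `s`:
`M_u(x) = sup_{0 < s' ≤ s} μ(B(x,s'))⁻¹ ∫_{B(x,s')} |u| dμ`, valued in `ℝ≥0∞`. -/
noncomputable def restrMaximal {X : Type*} [MetricSpace X] [MeasurableSpace X]
    (μ : Measure X) (s : ℝ) (u : X → ℝ) (x : X) : ℝ≥0∞ :=
  ⨆ (s' : ℝ) (_ : s' ∈ Set.Ioc (0:ℝ) s),
    (μ (ball x s'))⁻¹ * ∫⁻ y in ball x s', ENNReal.ofReal |u y| ∂μ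

lemma measurable_measure_ball' {X : Type*} [MetricSpace X] [MeasurableSpace X] [BorelSpace X]
    (ν : Measure X) (r : ℝ) : Measurable fun x => ν (ball x r) := by
  have hopen : ∀ a : ℝ≥0∞, IsOpen {x : X | a < ν (ball x r)} := by
    intro a
    rw [Metric.isOpen_iff]
    intro x hx
    simp only [Set.mem_setOf_eq] at hx
    have hmono : Monotone fun n : ℕ => ball x (r - 1/(n+1)) := by
      intro m n hmn
      apply ball_subset_ball
      have h1 : (1:ℝ)/(n+1) ≤ 1/(m+1) := by
        apply one_div_le_one_div_of_le
        · positivity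
        · have : (m:ℝ) ≤ n := by exact_mod_cast hmn
          linarith
      linarith
    have hunion : ball x r = ⋃ n : ℕ, ball x (r - 1/(n+1)) := by
      ext y
      simp only [Set.mem_iUnion, mem_ball]
      constructor
      · intro hy
        obtain ⟨n, hn⟩ := exists_nat_one_div_lt (show (0:ℝ) < r - dist y x by linarith)
        exact ⟨n, by linarith⟩
      · rintro ⟨n, hn⟩
        have h2 : (0:ℝ) < 1/(n+1) := by positivity
        linarith
    rw [hunion, hmono.directed_le.measure_iUnion, lt_iSup_iff] at hx
    obtain ⟨n, hn⟩ := hx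
    refine ⟨1/(n+1), by positivity, ?_⟩
    intro y hy
    simp only [Set.mem_setOf_eq]
    refine hn.trans_le (measure_mono ?_)
    intro z hz
    simp only [mem_ball] at hz hy ⊢
    have := dist_triangle z x y
    rw [dist_comm x y] at this
    linarith [dist_triangle z y x]
  apply measurable_of_Ioi
  intro a
  exact (hopen a).measurableSet

lemma weak_type_est {X : Type*} [MetricSpace X] [MeasurableSpace X] [BorelSpace X]
    (μ ρ : Measure X) (hρfin : ρ Set.univ ≠ ⊤)
    (hpos : ∀ (x : X) (r : ℝ), 0 < r → μ (ball x r) ≠ 0)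
    (D : ℝ≥0∞)
    (hdouble : ∀ (x : X) (r : ℝ), 0 < r → μ (ball x (2 * r)) ≤ D * μ (ball x r))
    (V : Set X) (E : Set X) (s2 : ℝ) (hs2 : 0 < s2)
    (t : ℝ≥0∞) (ht : t ≠ 0)
    (h : ∀ x ∈ E, ∃ q : ℝ, 0 < q ∧ q ≤ s2 ∧ closedBall x q ⊆ V ∧
      t * μ (ball x (q / 2)) ≤ ρ (ball x q)) :
    t * μ E ≤ D ^ 4 * ρ V := by
  classical
  -- choose radii
  let r : X → ℝ := fun x => if hx : x ∈ E then (h x hx).choose else 0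
  have hr0 : ∀ x ∈ E, 0 < r x := by
    intro x hx; simp only [r, dif_pos hx]; exact (h x hx).choose_spec.1
  have hrs : ∀ x ∈ E, r x ≤ s2 := by
    intro x hx; simp only [r, dif_pos hx]; exact (h x hx).choose_spec.2.1
  have hrV : ∀ x ∈ E, closedBall x (r x) ⊆ V := by
    intro x hx; simp only [r, dif_pos hx]; exact (h x hx).choose_spec.2.2.1
  have hrint : ∀ x ∈ E, t * μ (ball x (r x / 2)) ≤ ρ (ball x (r x)) := by
    intro x hx; simp only [r, dif_pos hx]; exact (h x hx).choose_spec.2.2.2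
  obtain ⟨v, hvE, hdisj, hcov⟩ :=
    Vitali.exists_disjoint_subfamily_covering_enlargement_closedBall E (id : X → X) r s2
      hrs 5 (by norm_num)
  -- the covering by enlarged open balls
  have hcover : E ⊆ ⋃ b ∈ v, ball b (8 * r b) := by
    intro x hx
    obtain ⟨b, hb, hsub⟩ := hcov x hx
    have hxmem : x ∈ closedBall (id x) (r x) := mem_closedBall_self (hr0 x hx).le
    have := hsub hxmem
    simp only [Set.mem_iUnion]
    refine ⟨b, hb, ?_⟩
    simp only [id_eq, mem_closedBall] at this
    simp only [mem_ball]
    have hrb : 0 < r b := hr0 b (hvE hb)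
    calc dist x b ≤ 5 * r b := this
      _ < 8 * r b := by linarith
  -- positivity of ρ on the chosen balls
  have hρball : ∀ b ∈ v, 0 < ρ (ball b (r b)) := by
    intro b hb
    have hbE := hvE hb
    refine lt_of_lt_of_le ?_ (hrint b hbE)
    have hrb := hr0 b hbE
    exact ENNReal.mul_pos ht (hpos b _ (by linarith))
  -- countability of the disjoint family
  have hvcnt : v.Countable := by
    have hc := Measure.countable_meas_pos_of_disjoint_of_meas_iUnion_ne_top ρ
      (As := fun b : v => closedBall (b : X) (r b))
      (fun b => measurableSet_closedBall)
      (fun i j hij => hdisj i.2 j.2 (fun hh => hij (Subtype.ext hh)))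
      (ne_top_of_le_ne_top hρfin (measure_mono (Set.subset_univ _)))
    have heq : {i : v | 0 < ρ (closedBall (i : X) (r i))} = Set.univ := by
      ext i
      simp only [Set.mem_setOf_eq, Set.mem_univ, iff_true]
      exact lt_of_lt_of_le (hρball i i.2) (measure_mono ball_subset_closedBall)
    rw [heq] at hc
    have : Countable v := Set.countable_univ_iff.mp hc
    exact Set.countable_coe_iff.mp this
  -- per-ball estimate
  have hper : ∀ b ∈ v, t * μ (ball b (8 * r b)) ≤ D ^ 4 * ρ (ball b (r b)) := by
    intro b hb
    have hbE := hvE hb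
    have hrb : 0 < r b := hr0 b hbE
    have h1 : μ (ball b (8 * r b)) ≤ D ^ 4 * μ (ball b (r b / 2)) := by
      have hd1 := hdouble b (4 * r b) (by linarith)
      rw [show (2:ℝ) * (4 * r b) = 8 * r b by ring] at hd1
      have hd2 := hdouble b (2 * r b) (by linarith)
      rw [show (2:ℝ) * (2 * r b) = 4 * r b by ring] at hd2
      have hd3 := hdouble b (r b) hrb
      have hd4 := hdouble b (r b / 2) (by linarith)
      rw [show (2:ℝ) * (r b / 2) = r b by ring] at hd4
      calc μ (ball b (8 * r b)) ≤ D * μ (ball b (4 * r b)) := hd1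
        _ ≤ D * (D * μ (ball b (2 * r b))) := by gcongr
        _ ≤ D * (D * (D * μ (ball b (r b)))) := by gcongr
        _ ≤ D * (D * (D * (D * μ (ball b (r b / 2))))) := by gcongr
        _ = D ^ 4 * μ (ball b (r b / 2)) := by ring
    calc t * μ (ball b (8 * r b)) ≤ t * (D ^ 4 * μ (ball b (r b / 2))) := by gcongr
      _ = D ^ 4 * (t * μ (ball b (r b / 2))) := by ring
      _ ≤ D ^ 4 * ρ (ball b (r b)) := by gcongr; exact hrint b hbE
  -- main chain
  calc t * μ E ≤ t * μ (⋃ b ∈ v, ball b (8 * r b)) := mul_le_mul_right (measure_mono hcover) t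
    _ ≤ t * ∑' b : v, μ (ball (b : X) (8 * r b)) := by
        gcongr; exact measure_biUnion_le μ hvcnt _
    _ = ∑' b : v, t * μ (ball (b : X) (8 * r b)) := ENNReal.tsum_mul_left.symm
    _ ≤ ∑' b : v, D ^ 4 * ρ (ball (b : X) (r b)) := ENNReal.tsum_le_tsum (fun b => hper b b.2)
    _ = D ^ 4 * ∑' b : v, ρ (ball (b : X) (r b)) := ENNReal.tsum_mul_left
    _ ≤ D ^ 4 * ∑' b : v, ρ (closedBall (b : X) (r b)) := by
        gcongr with b
        exact ball_subset_closedBall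
    _ ≤ D ^ 4 * ρ (⋃ b : v, closedBall (b : X) (r b)) := by
        gcongr
        exact tsum_meas_le_meas_iUnion_of_disjoint ρ (fun b => measurableSet_closedBall)
          (fun i j hij => hdisj i.2 j.2 (fun hh => hij (Subtype.ext hh)))
    _ ≤ D ^ 4 * ρ V := by
        gcongr
        simp only [Set.iUnion_subset_iff]
        intro b
        exact hrV b (hvE b.2)

set_option maxHeartbeats 1000000 in
theorem maximal_function_estimate (C_D α : ℝ) (hCD : 1 ≤ C_D) (hα0 : 0 < α) (hα1 : α < 1) :
    ∃ C : ℝ, 0 < C ∧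
      ∀ (X : Type*) [MetricSpace X] [MeasurableSpace X] [BorelSpace X]
        (μ : Measure X),
        (∀ (x : X) (r : ℝ), 0 < r → 0 < μ (ball x r) ∧ μ (ball x r) < ⊤) →
        (∀ (x : X) (r : ℝ), 0 < r → μ (ball x (2 * r)) ≤ ENNReal.ofReal C_D * μ (ball x r)) →
        ∀ (s : ℝ), 0 < s →
        ∀ (u : X → ℝ), Integrable u μ →
        ∀ (W : Set X), MeasurableSet W → 0 < μ W → μ W < ⊤ →
          ((μ W)⁻¹ * ∫⁻ x in W, (restrMaximal μ s u x) ^ α ∂μ) ^ (1 / α) ≤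
            ENNReal.ofReal C * (μ W)⁻¹ *
              ∫⁻ x in {y : X | ∃ w ∈ W, dist y w < 6 * s}, ENNReal.ofReal |u x| ∂μ := by
  -- real constants
  have h2a : (0:ℝ) < 2 ^ α := Real.rpow_pos_of_pos two_pos α
  have hr2lt : (2:ℝ) ^ (α - 1) < 1 := Real.rpow_lt_one_of_one_lt_of_neg one_lt_two (by linarith)
  have hr2pos : (0:ℝ) < 2 ^ (α - 1) := Real.rpow_pos_of_pos two_pos _
  have hCD0 : (0:ℝ) < C_D := by linarith
  have hinvpos : (0:ℝ) < (1 - 2 ^ (α - 1))⁻¹ := inv_pos.mpr (by linarith)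
  have hκpos : (0:ℝ) < 1 + C_D ^ 4 * 2 ^ α * (1 - 2 ^ (α - 1))⁻¹ := by
    have h1 : (0:ℝ) < C_D ^ 4 * 2 ^ α * (1 - 2 ^ (α - 1))⁻¹ := by positivity
    linarith
  set κ : ℝ := 1 + C_D ^ 4 * 2 ^ α * (1 - 2 ^ (α - 1))⁻¹ with hκdef
  refine ⟨κ ^ (1/α), Real.rpow_pos_of_pos hκpos _, ?_⟩
  intro X _ _ _ μ hpos hdouble s hs u hu W hW hWpos hWfin
  set D : ℝ≥0∞ := ENNReal.ofReal C_D with hDdef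
  have hD0 : D ≠ 0 := by simp [hDdef, ENNReal.ofReal_eq_zero]; linarith
  have hDtop : D ≠ ⊤ := ENNReal.ofReal_ne_top
  set V : Set X := {y : X | ∃ w ∈ W, dist y w < 6 * s} with hVdef
  have hVopen : IsOpen V := by
    have : V = ⋃ w ∈ W, ball w (6 * s) := by
      ext y; simp [hVdef, mem_ball, dist_comm]
    rw [this]
    exact isOpen_biUnion fun w _ => isOpen_ball
  have hVmeas : MeasurableSet V := hVopen.measurableSet
  set g : X → ℝ≥0∞ := fun y => ENNReal.ofReal |u y| with hgdef
  have hg : AEMeasurable g μ :=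
    ENNReal.measurable_ofReal.comp_aemeasurable
      (continuous_abs.measurable.comp_aemeasurable hu.aemeasurable)
  set ρ : Measure X := μ.withDensity (hg.mk g) with hρdef
  have hρs : ∀ (A : Set X), MeasurableSet A → ρ A = ∫⁻ y in A, g y ∂μ := by
    intro A hA
    rw [hρdef, withDensity_apply _ hA]
    exact lintegral_congr_ae (ae_restrict_of_ae hg.ae_eq_mk.symm)
  have hρfin : ρ Set.univ ≠ ⊤ := by
    rw [hρs Set.univ MeasurableSet.univ, Measure.restrict_univ]
    have : ∫⁻ y, g y ∂μ = ∫⁻ y, (‖u y‖₊ : ℝ≥0∞) ∂μ := by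
      apply lintegral_congr; intro y; rw [hgdef]; exact (Real.enorm_eq_ofReal_abs _).symm
    rw [this]
    exact hu.2.ne
  set I : ℝ≥0∞ := ρ V with hIdef
  have hIfin : I ≠ ⊤ := ne_top_of_le_ne_top hρfin (measure_mono (Set.subset_univ _))
  have hIeq : ∫⁻ x in V, ENNReal.ofReal |u x| ∂μ = I := (hρs V hVmeas).symm
  -- countable maximal function
  set MM : X → ℝ≥0∞ := fun x => ⨆ (q : ℚ) (_ : 0 < (q:ℝ) ∧ (q:ℝ) ≤ 2 * s),
    (μ (ball x ((q:ℝ) / 2)))⁻¹ * ρ (ball x (q:ℝ)) with hMMdef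
  have hMMmeas : Measurable MM := by
    apply Measurable.iSup
    intro q
    apply Measurable.iSup
    intro _
    exact (measurable_measure_ball' μ _).inv.mul (measurable_measure_ball' ρ _)
  have hM_le : ∀ x, restrMaximal μ s u x ≤ MM x := by
    intro x
    rw [restrMaximal]
    apply iSup₂_le
    intro s' hs'
    obtain ⟨hs'0, hs's⟩ := hs'
    obtain ⟨q, hq1, hq2⟩ := exists_rat_btwn (show s' < 2 * s' by linarith)
    have hq0 : 0 < (q:ℝ) := lt_trans hs'0 hq1
    have hq2s : (q:ℝ) ≤ 2 * s := by linarith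
    have hstep : (μ (ball x s'))⁻¹ * ∫⁻ y in ball x s', ENNReal.ofReal |u y| ∂μ ≤
        (μ (ball x ((q:ℝ) / 2)))⁻¹ * ρ (ball x (q:ℝ)) := by
      apply mul_le_mul'
      · exact ENNReal.inv_le_inv' (measure_mono (ball_subset_ball (by linarith)))
      · rw [← hρs _ measurableSet_ball]
        exact measure_mono (ball_subset_ball hq1.le)
    refine hstep.trans ?_
    exact le_iSup₂ (f := fun (q : ℚ) (_ : 0 < (q:ℝ) ∧ (q:ℝ) ≤ 2 * s) =>
      (μ (ball x ((q:ℝ) / 2)))⁻¹ * ρ (ball x (q:ℝ))) q ⟨hq0, hq2s⟩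
  -- weak type estimate
  have hweak : ∀ t : ℝ≥0∞, t ≠ 0 → t * μ {x | x ∈ W ∧ t < MM x} ≤ D ^ 4 * I := by
    intro t ht
    apply weak_type_est μ ρ hρfin (fun x r hr => (hpos x r hr).1.ne') D hdouble V _ (2 * s)
      (by linarith) t ht
    rintro x ⟨hxW, hxM⟩
    rw [hMMdef] at hxM
    simp only [lt_iSup_iff] at hxM
    obtain ⟨q, ⟨hq0, hq2s⟩, hlt⟩ := hxM
    refine ⟨(q:ℝ), hq0, hq2s, ?_, ?_⟩
    · intro y hy
      rw [mem_closedBall] at hy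
      exact ⟨x, hxW, by rw [hVdef] at *; linarith⟩
    · set a := μ (ball x ((q:ℝ) / 2)) with hadef
      have ha0 : a ≠ 0 := (hpos x _ (by linarith)).1.ne'
      have hatop : a ≠ ⊤ := (hpos x _ (by linarith)).2.ne
      calc t * a ≤ (a⁻¹ * ρ (ball x (q:ℝ))) * a := mul_le_mul_left hlt.le a
        _ = ρ (ball x (q:ℝ)) * (a⁻¹ * a) := by ring
        _ = ρ (ball x (q:ℝ)) := by rw [ENNReal.inv_mul_cancel ha0 hatop, mul_one]
  rcases eq_or_ne I 0 with hI0 | hI0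
  · -- degenerate case
    have hzero : ∀ x ∈ W, restrMaximal μ s u x = 0 := by
      intro x hx
      apply le_antisymm _ zero_le
      rw [restrMaximal]
      apply iSup₂_le
      intro s' hs'
      have hball : ball x s' ⊆ V := by
        intro y hy
        rw [mem_ball] at hy
        exact ⟨x, hx, by linarith [hs'.2]⟩
      have : ∫⁻ y in ball x s', ENNReal.ofReal |u y| ∂μ = 0 := by
        apply le_antisymm _ zero_le
        rw [← hρs _ measurableSet_ball, ← hI0]
        exact measure_mono hball
      rw [this, mul_zero]
    have hint0 : ∫⁻ x in W, (restrMaximal μ s u x) ^ α ∂μ = 0 := by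
      apply le_antisymm _ zero_le
      calc ∫⁻ x in W, (restrMaximal μ s u x) ^ α ∂μ ≤ ∫⁻ _ in W, 0 ∂μ := by
            apply lintegral_mono_ae
            filter_upwards [ae_restrict_mem hW] with x hx
            rw [hzero x hx, ENNReal.zero_rpow_of_pos hα0]
        _ = 0 := lintegral_zero
    rw [hint0, mul_zero, ENNReal.zero_rpow_of_pos (by positivity)]
    exact zero_le
  · -- main case
    have hW0 : μ W ≠ 0 := hWpos.ne'
    have hWt : μ W ≠ ⊤ := hWfin.ne
    set T : ℝ≥0∞ := I * (μ W)⁻¹ with hTdef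
    have hT0 : T ≠ 0 := mul_ne_zero hI0 (ENNReal.inv_ne_zero.mpr hWt)
    have hTtop : T ≠ ⊤ := ENNReal.mul_ne_top hIfin (ENNReal.inv_ne_top.mpr hW0)
    set r2 : ℝ≥0∞ := (2:ℝ≥0∞) ^ (α - 1) with hr2def
    -- level sets
    set A0 : Set X := W ∩ {x | MM x ≤ T} with hA0def
    set AA : ℕ → Set X := fun k => W ∩ {x | 2 ^ k * T < MM x ∧ MM x ≤ 2 ^ (k + 1) * T}
      with hAAdef
    set AN : Set X := W ∩ {x | MM x = ⊤} with hANdef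
    have hA0meas : MeasurableSet A0 := hW.inter (hMMmeas measurableSet_Iic)
    have hAAmeas : ∀ k, MeasurableSet (AA k) := fun k => hW.inter (hMMmeas measurableSet_Ioc)
    have hcover : W ⊆ (A0 ∪ ⋃ k, AA k) ∪ AN := by
      intro x hx
      rcases le_or_gt (MM x) T with hle | hgt
      · exact Or.inl (Or.inl ⟨hx, hle⟩)
      rcases eq_or_ne (MM x) ⊤ with htop | hne
      · exact Or.inr ⟨hx, htop⟩
      have hfind : ∃ n : ℕ, MM x ≤ 2 ^ n * T := by
        obtain ⟨n, hn⟩ := ENNReal.exists_nat_gt ((ENNReal.div_lt_top hne hT0).ne)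
        refine ⟨n, ?_⟩
        have h1 : MM x < (n : ℝ≥0∞) * T :=
          (ENNReal.div_lt_iff (Or.inl hT0) (Or.inl hTtop)).mp hn
        have h2 : (n : ℝ≥0∞) ≤ 2 ^ n := by
          exact_mod_cast (Nat.lt_two_pow_self (n := n)).le
        exact h1.le.trans (mul_le_mul_left h2 T)
      classical
      set n0 := Nat.find hfind with hn0def
      have hn0spec : MM x ≤ 2 ^ n0 * T := Nat.find_spec hfind
      have hn0pos : n0 ≠ 0 := by
        intro h0
        rw [h0, pow_zero, one_mul] at hn0spec
        exact absurd hn0spec (not_le.mpr hgt)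
      set k := n0 - 1 with hkdef
      have hk1 : k + 1 = n0 := Nat.succ_pred_eq_of_ne_zero hn0pos
      have hklt : 2 ^ k * T < MM x := not_le.mp (Nat.find_min hfind (by omega))
      exact Or.inl (Or.inr (Set.mem_iUnion.mpr ⟨k, hx, hklt, hk1 ▸ hn0spec⟩))
    -- measure of the infinity part
    have hANzero : μ AN = 0 := by
      by_contra hne
      have hANfin : μ AN ≠ ⊤ := ne_top_of_le_ne_top hWt (measure_mono Set.inter_subset_left)
      set t0 : ℝ≥0∞ := (D ^ 4 * I + 1) * (μ AN)⁻¹ with ht0def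
      have hB : D ^ 4 * I ≠ ⊤ := ENNReal.mul_ne_top (by
        exact ENNReal.pow_ne_top hDtop) hIfin
      have ht00 : t0 ≠ 0 := mul_ne_zero (by simp) (ENNReal.inv_ne_zero.mpr hANfin)
      have ht0top : t0 ≠ ⊤ :=
        ENNReal.mul_ne_top (by simp [hB]) (ENNReal.inv_ne_top.mpr hne)
      have hsub : AN ⊆ {x | x ∈ W ∧ t0 < MM x} := by
        rintro x ⟨hxW, hxM⟩
        exact ⟨hxW, by rw [Set.mem_setOf_eq] at hxM; rw [hxM]; exact ht0top.lt_top⟩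
      have hchain := (mul_le_mul_right (measure_mono hsub) t0).trans (hweak t0 ht00)
      have heq : t0 * μ AN = D ^ 4 * I + 1 := by
        rw [ht0def, mul_assoc, ENNReal.inv_mul_cancel hne hANfin, mul_one]
      rw [heq] at hchain
      exact absurd hchain (not_le.mpr (ENNReal.lt_add_right hB one_ne_zero))
    -- the three bounds
    have hbound0 : ∫⁻ x in A0, (MM x) ^ α ∂μ ≤ T ^ α * μ W := by
      calc ∫⁻ x in A0, (MM x) ^ α ∂μ ≤ ∫⁻ _ in A0, T ^ α ∂μ := by
            apply lintegral_mono_ae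
            filter_upwards [ae_restrict_mem hA0meas] with x hx
            exact ENNReal.rpow_le_rpow hx.2 hα0.le
        _ = T ^ α * μ A0 := setLIntegral_const _ _
        _ ≤ T ^ α * μ W := by gcongr; exact Set.inter_subset_left
    have hboundk : ∀ k : ℕ, ∫⁻ x in AA k, (MM x) ^ α ∂μ ≤
        (2 ^ (k + 1) * T) ^ α * (D ^ 4 * I / (2 ^ k * T)) := by
      intro k
      have h2k0 : (2:ℝ≥0∞) ^ k * T ≠ 0 := mul_ne_zero (by positivity) hT0
      have h2ktop : (2:ℝ≥0∞) ^ k * T ≠ ⊤ :=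
        ENNReal.mul_ne_top (by exact ENNReal.pow_ne_top (by norm_num)) hTtop
      have hmeas : μ (AA k) ≤ D ^ 4 * I / (2 ^ k * T) := by
        rw [ENNReal.le_div_iff_mul_le (Or.inl h2k0) (Or.inl h2ktop)]
        rw [mul_comm]
        refine le_trans (mul_le_mul_right (measure_mono ?_) _) (hweak _ h2k0)
        rintro x ⟨hxW, hx1, _⟩
        exact ⟨hxW, hx1⟩
      calc ∫⁻ x in AA k, (MM x) ^ α ∂μ ≤ ∫⁻ _ in AA k, (2 ^ (k + 1) * T) ^ α ∂μ := by
            apply lintegral_mono_ae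
            filter_upwards [ae_restrict_mem (hAAmeas k)] with x hx
            exact ENNReal.rpow_le_rpow hx.2.2 hα0.le
        _ = (2 ^ (k + 1) * T) ^ α * μ (AA k) := setLIntegral_const _ _
        _ ≤ (2 ^ (k + 1) * T) ^ α * (D ^ 4 * I / (2 ^ k * T)) := by gcongr
    -- per-term identity and geometric sum
    have h2ne0 : (2:ℝ≥0∞) ≠ 0 := by norm_num
    have h2netop : (2:ℝ≥0∞) ≠ ⊤ := by norm_num
    have hterm : ∀ k : ℕ, (2 ^ (k + 1) * T) ^ α * (D ^ 4 * I / (2 ^ k * T)) =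
        (D ^ 4 * (2:ℝ≥0∞) ^ α * (T ^ α * μ W)) * r2 ^ k := by
      intro k
      have hd : D ^ 4 * I / (2 ^ k * T) = D ^ 4 * ((2:ℝ≥0∞) ^ k)⁻¹ * μ W := by
        rw [hTdef, div_eq_mul_inv]
        rw [ENNReal.mul_inv (Or.inl (by positivity)) (Or.inl (by
          exact ENNReal.pow_ne_top (by norm_num)))]
        rw [ENNReal.mul_inv (Or.inl hI0) (Or.inl hIfin), inv_inv]
        calc D ^ 4 * I * (((2:ℝ≥0∞) ^ k)⁻¹ * (I⁻¹ * μ W))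
            = D ^ 4 * ((2:ℝ≥0∞) ^ k)⁻¹ * μ W * (I * I⁻¹) := by ring
          _ = D ^ 4 * ((2:ℝ≥0∞) ^ k)⁻¹ * μ W := by
              rw [ENNReal.mul_inv_cancel hI0 hIfin, mul_one]
      have hp : ((2:ℝ≥0∞) ^ (k + 1)) ^ α * ((2:ℝ≥0∞) ^ k)⁻¹ =
          (2:ℝ≥0∞) ^ α * r2 ^ k := by
        rw [← ENNReal.rpow_natCast (2:ℝ≥0∞) (k+1), ← ENNReal.rpow_natCast (2:ℝ≥0∞) k,
          ← ENNReal.rpow_mul, ← ENNReal.rpow_neg,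
          ← ENNReal.rpow_add _ _ h2ne0 h2netop, hr2def,
          ← ENNReal.rpow_natCast ((2:ℝ≥0∞) ^ (α - 1)) k, ← ENNReal.rpow_mul,
          ← ENNReal.rpow_add _ _ h2ne0 h2netop]
        congr 1
        push_cast
        ring
      rw [ENNReal.mul_rpow_of_nonneg _ _ hα0.le, hd]
      calc ((2:ℝ≥0∞) ^ (k + 1)) ^ α * T ^ α * (D ^ 4 * ((2:ℝ≥0∞) ^ k)⁻¹ * μ W)
          = ((2:ℝ≥0∞) ^ (k + 1)) ^ α * ((2:ℝ≥0∞) ^ k)⁻¹ * (T ^ α * (D ^ 4 * μ W)) := by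
            ring
        _ = (2:ℝ≥0∞) ^ α * r2 ^ k * (T ^ α * (D ^ 4 * μ W)) := by rw [hp]
        _ = (D ^ 4 * (2:ℝ≥0∞) ^ α * (T ^ α * μ W)) * r2 ^ k := by ring
    have hsum : ∑' k : ℕ, (2 ^ (k + 1) * T) ^ α * (D ^ 4 * I / (2 ^ k * T)) =
        D ^ 4 * (2:ℝ≥0∞) ^ α * (T ^ α * μ W) * (1 - r2)⁻¹ := by
      calc ∑' k : ℕ, (2 ^ (k + 1) * T) ^ α * (D ^ 4 * I / (2 ^ k * T))
          = ∑' k : ℕ, (D ^ 4 * (2:ℝ≥0∞) ^ α * (T ^ α * μ W)) * r2 ^ k := by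
            exact tsum_congr hterm
        _ = (D ^ 4 * (2:ℝ≥0∞) ^ α * (T ^ α * μ W)) * ∑' k : ℕ, r2 ^ k :=
            ENNReal.tsum_mul_left
        _ = D ^ 4 * (2:ℝ≥0∞) ^ α * (T ^ α * μ W) * (1 - r2)⁻¹ := by
            rw [ENNReal.tsum_geometric]
    -- assemble the integral bound
    set κE : ℝ≥0∞ := 1 + D ^ 4 * (2:ℝ≥0∞) ^ α * (1 - r2)⁻¹ with hκEdef
    have hkey : ∫⁻ x in W, (restrMaximal μ s u x) ^ α ∂μ ≤ κE * (T ^ α * μ W) := by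
      calc ∫⁻ x in W, (restrMaximal μ s u x) ^ α ∂μ
          ≤ ∫⁻ x in W, (MM x) ^ α ∂μ :=
            lintegral_mono fun x => ENNReal.rpow_le_rpow (hM_le x) hα0.le
        _ ≤ ∫⁻ x in (A0 ∪ ⋃ k, AA k) ∪ AN, (MM x) ^ α ∂μ :=
            lintegral_mono' (Measure.restrict_mono hcover le_rfl) le_rfl
        _ ≤ (∫⁻ x in A0 ∪ ⋃ k, AA k, (MM x) ^ α ∂μ) + ∫⁻ x in AN, (MM x) ^ α ∂μ := by
            refine le_trans (lintegral_mono' (Measure.restrict_union_le _ _) le_rfl) ?_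
            rw [lintegral_add_measure]
        _ ≤ ((∫⁻ x in A0, (MM x) ^ α ∂μ) + ∫⁻ x in ⋃ k, AA k, (MM x) ^ α ∂μ) +
              ∫⁻ x in AN, (MM x) ^ α ∂μ := by
            refine add_le_add_left ?_ _
            refine le_trans (lintegral_mono' (Measure.restrict_union_le _ _) le_rfl) ?_
            rw [lintegral_add_measure]
        _ ≤ ((T ^ α * μ W) + ∑' k : ℕ, ∫⁻ x in AA k, (MM x) ^ α ∂μ) + 0 := by
            refine add_le_add (add_le_add hbound0 (lintegral_iUnion_le _ _)) (le_of_eq ?_)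
            rw [Measure.restrict_eq_zero.mpr hANzero, lintegral_zero_measure]
        _ ≤ ((T ^ α * μ W) + ∑' k : ℕ, (2 ^ (k + 1) * T) ^ α * (D ^ 4 * I / (2 ^ k * T)))
              + 0 :=
            add_le_add_left (add_le_add_right (ENNReal.tsum_le_tsum hboundk) _) 0
        _ = κE * (T ^ α * μ W) := by
            rw [hsum, add_zero, hκEdef]
            ring
    -- conclude
    have hstep2 : (μ W)⁻¹ * ∫⁻ x in W, (restrMaximal μ s u x) ^ α ∂μ ≤ κE * T ^ α := by
      calc (μ W)⁻¹ * ∫⁻ x in W, (restrMaximal μ s u x) ^ α ∂μ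
          ≤ (μ W)⁻¹ * (κE * (T ^ α * μ W)) := by gcongr
        _ = (κE * T ^ α) * ((μ W)⁻¹ * μ W) := by ring
        _ = κE * T ^ α := by rw [ENNReal.inv_mul_cancel hW0 hWt, mul_one]
    have hκE_ofReal : κE = ENNReal.ofReal κ := by
      have e1 : D ^ 4 = ENNReal.ofReal (C_D ^ 4) := by
        rw [hDdef, ENNReal.ofReal_pow hCD0.le]
      have e2 : (2:ℝ≥0∞) ^ α = ENNReal.ofReal ((2:ℝ) ^ α) := by
        rw [← ENNReal.ofReal_ofNat 2, ENNReal.ofReal_rpow_of_pos two_pos]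
      have e3 : r2 = ENNReal.ofReal ((2:ℝ) ^ (α - 1)) := by
        rw [hr2def, ← ENNReal.ofReal_ofNat 2, ENNReal.ofReal_rpow_of_pos two_pos]
      have e4 : (1 - r2)⁻¹ = ENNReal.ofReal ((1 - (2:ℝ) ^ (α - 1))⁻¹) := by
        rw [ENNReal.ofReal_inv_of_pos (by linarith), ENNReal.ofReal_sub _ hr2pos.le,
          ENNReal.ofReal_one, e3]
      rw [hκEdef, hκdef, e1, e2, e4, ← ENNReal.ofReal_mul (by positivity),
        ← ENNReal.ofReal_mul (by positivity), ← ENNReal.ofReal_one,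
        ← ENNReal.ofReal_add (by norm_num) (by positivity)]
    calc ((μ W)⁻¹ * ∫⁻ x in W, (restrMaximal μ s u x) ^ α ∂μ) ^ (1 / α)
        ≤ (κE * T ^ α) ^ (1 / α) := ENNReal.rpow_le_rpow hstep2 (by positivity)
      _ = κE ^ (1 / α) * (T ^ α) ^ (1 / α) := ENNReal.mul_rpow_of_nonneg _ _ (by positivity)
      _ = κE ^ (1 / α) * T := by
          rw [← ENNReal.rpow_mul, mul_one_div_cancel hα0.ne', ENNReal.rpow_one]
      _ = ENNReal.ofReal (κ ^ (1 / α)) * T := by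
          rw [hκE_ofReal, ENNReal.ofReal_rpow_of_pos hκpos]
      _ = ENNReal.ofReal (κ ^ (1 / α)) * (μ W)⁻¹ *
            ∫⁻ x in {y : X | ∃ w ∈ W, dist y w < 6 * s}, ENNReal.ofReal |u x| ∂μ := by
          rw [show ∫⁻ x in {y : X | ∃ w ∈ W, dist y w < 6 * s}, ENNReal.ofReal |u x| ∂μ
              = I from hIeq, hTdef]
          ring
end

section
/- For every c > 0 there exists a constant C > 0, depending only on c, with the following property: for every r ∈ (0,1) and every sequence (x_i)_{i≥1} of nonnegative real numbers satisfying x_i ≤ c·r⁻⁴·16^i + c·r⁻¹·2^i·x_{i+1}^{3/4} for every i ≥ 1, and limsup_{i→∞} x_i^{(3/4)^i} ≤ 1, one has x₁ ≤ C·r⁻⁴. -/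
noncomputable def itA (d : ℝ) (i : ℕ) : ℝ := (4/3:ℝ)^i + 4*i + 12 + 4*d

lemma itA_id (d : ℝ) (i : ℕ) : (itA d i - d - i) * (4/3) = itA d (i+1) := by
  simp only [itA, pow_succ]
  push_cast
  ring

lemma itA_ge1 (d : ℝ) (hd : 1 ≤ d) (i : ℕ) : d + 4*i ≤ itA d i := by
  have h1 : (0:ℝ) ≤ (4/3:ℝ)^i := by positivity
  simp only [itA]; linarith

lemma itA_ge2 (d : ℝ) (hd : 1 ≤ d) (i : ℕ) : (4/3:ℝ)^i ≤ itA d i := by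
  have h1 : (0:ℝ) ≤ (i:ℝ) := Nat.cast_nonneg i
  simp only [itA]; linarith

theorem iteration_lemma (c : ℝ) (hc : 0 < c) :
    ∃ C : ℝ, 0 < C ∧
      ∀ (r : ℝ), 0 < r → r < 1 →
        ∀ (x : ℕ → ℝ), (∀ i, 1 ≤ i → 0 ≤ x i) →
          (∀ i, 1 ≤ i →
            x i ≤ c * 16 ^ i / r ^ 4 + c * 2 ^ i / r * x (i + 1) ^ ((3:ℝ)/4)) →
          Filter.limsup (fun i : ℕ => ((x i ^ (((3:ℝ)/4) ^ i) : ℝ) : EReal)) Filter.atTop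
              ≤ (1 : EReal) →
          x 1 ≤ C / r ^ 4 := by
  set c' : ℝ := max c 1 with hc'def
  have hc'1 : (1:ℝ) ≤ c' := le_max_right _ _
  have hc'0 : (0:ℝ) < c' := lt_of_lt_of_le one_pos hc'1
  set d : ℝ := Real.logb 2 (2 * c') with hddef
  have h2d : (2:ℝ) ^ d = 2 * c' :=
    Real.rpow_logb (by norm_num) (by norm_num) (by positivity)
  have hd1 : (1:ℝ) ≤ d := by
    have : (2:ℝ) ^ (1:ℝ) ≤ (2:ℝ) ^ d := by
      rw [Real.rpow_one, h2d]; linarith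
    exact (Real.rpow_le_rpow_left_iff one_lt_two).mp this
  refine ⟨(2:ℝ) ^ (itA d 1), Real.rpow_pos_of_pos two_pos _, ?_⟩
  intro r hr0 hr1 x hx hrec hlimsup
  by_contra hcon
  push_neg at hcon
  have hr4 : (0:ℝ) < r ^ 4 := by positivity
  -- upgrade the recursion to c'
  have hrec' : ∀ i, 1 ≤ i →
      x i ≤ c' * 16 ^ i / r ^ 4 + c' * 2 ^ i / r * x (i + 1) ^ ((3:ℝ)/4) := by
    intro i hi
    have hy0 : 0 ≤ x (i+1) ^ ((3:ℝ)/4) := Real.rpow_nonneg (hx (i+1) (by omega)) _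
    have hcle : c ≤ c' := le_max_left _ _
    calc x i ≤ c * 16 ^ i / r ^ 4 + c * 2 ^ i / r * x (i + 1) ^ ((3:ℝ)/4) := hrec i hi
      _ ≤ c' * 16 ^ i / r ^ 4 + c' * 2 ^ i / r * x (i + 1) ^ ((3:ℝ)/4) := by gcongr
  -- the key induction
  have key : ∀ i, 1 ≤ i → (2:ℝ) ^ (itA d i) / r ^ 4 ≤ x i := by
    intro i hi
    induction i, hi using Nat.le_induction with
    | base => exact hcon.le
    | succ n hn ih =>
      set y : ℝ := x (n+1) ^ ((3:ℝ)/4) with hydef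
      have hxn0 : 0 ≤ x n := hx n hn
      have hy0 : 0 ≤ y := Real.rpow_nonneg (hx (n+1) (by omega)) _
      -- a_n ≤ x n / 2
      have e1 : c' * 16 ^ n = (2:ℝ) ^ (d - 1 + 4*(n:ℝ)) := by
        rw [Real.rpow_add two_pos, Real.rpow_sub two_pos, h2d, Real.rpow_one,
          show ((4:ℝ)*(n:ℝ)) = ((4*n : ℕ):ℝ) by push_cast; ring, Real.rpow_natCast,
          pow_mul]
        norm_num
      have e2 : (2:ℝ) ^ (d - 1 + 4*(n:ℝ)) ≤ (2:ℝ) ^ (itA d n - 1) := by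
        apply Real.rpow_le_rpow_of_exponent_le one_le_two
        have := itA_ge1 d hd1 n
        linarith
      have e3 : (2:ℝ) ^ (itA d n - 1) = (2:ℝ) ^ (itA d n) / 2 := by
        rw [Real.rpow_sub two_pos, Real.rpow_one]
      have hai : c' * 16 ^ n / r ^ 4 ≤ x n / 2 := by
        have h1 : c' * 16 ^ n / r ^ 4 ≤ ((2:ℝ) ^ (itA d n) / 2) / r ^ 4 := by
          apply div_le_div_of_nonneg_right ?_ hr4.le
          · rw [e1, ← e3]; exact e2
        calc c' * 16 ^ n / r ^ 4 ≤ ((2:ℝ) ^ (itA d n) / 2) / r ^ 4 := h1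
          _ = ((2:ℝ) ^ (itA d n) / r ^ 4) / 2 := by ring
          _ ≤ x n / 2 := by linarith
      have hstep : x n / 2 ≤ c' * 2 ^ n / r * y := by
        have := hrec' n hn
        rw [← hydef] at this
        linarith
      -- divide out
      have hB : (0:ℝ) < c' * 2 ^ n / r := by positivity
      have h3 : (2:ℝ) ^ (itA d n) / r ^ 4 / (2 * (c' * 2 ^ n / r)) ≤ y := by
        rw [div_le_iff₀ (by positivity)]
        nlinarith [mul_le_mul_of_nonneg_right hstep (le_of_lt (by norm_num : (0:ℝ) < 2))]
      have heq : (2:ℝ) ^ (itA d n) / r ^ 4 / (2 * (c' * 2 ^ n / r))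
          = (2:ℝ) ^ (itA d n - d - n) / r ^ 3 := by
        rw [Real.rpow_sub two_pos, Real.rpow_sub two_pos, h2d, Real.rpow_natCast]
        have hrne : r ≠ 0 := hr0.ne'
        have hcne : c' ≠ 0 := hc'0.ne'
        field_simp
      rw [heq] at h3
      -- raise to the 4/3 power
      have h5 : ((2:ℝ) ^ (itA d n - d - n) / r ^ 3) ^ ((4:ℝ)/3) ≤ y ^ ((4:ℝ)/3) :=
        Real.rpow_le_rpow (by positivity) h3 (by norm_num)
      have hy43 : y ^ ((4:ℝ)/3) = x (n+1) := by
        rw [hydef, ← Real.rpow_mul (hx (n+1) (by omega))]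
        norm_num
      have hlhs : ((2:ℝ) ^ (itA d n - d - n) / r ^ 3) ^ ((4:ℝ)/3)
          = (2:ℝ) ^ (itA d (n+1)) / r ^ 4 := by
        rw [Real.div_rpow (by positivity) (by positivity),
          ← Real.rpow_natCast r 3, ← Real.rpow_mul hr0.le,
          ← Real.rpow_mul two_pos.le, itA_id]
        norm_num
      rw [hlhs, hy43] at h5
      exact h5
  -- contradiction with the limsup hypothesis
  have hge2 : ∀ i, 1 ≤ i → (2:ℝ) ≤ x i ^ (((3:ℝ)/4) ^ i) := by
    intro i hi
    have h1 : (2:ℝ) ^ ((4/3:ℝ)^i) ≤ x i := by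
      calc (2:ℝ) ^ ((4/3:ℝ)^i) ≤ (2:ℝ) ^ (itA d i) :=
            Real.rpow_le_rpow_of_exponent_le one_le_two (itA_ge2 d hd1 i)
        _ ≤ (2:ℝ) ^ (itA d i) / r ^ 4 :=
            le_div_self (by positivity) hr4 (pow_le_one₀ hr0.le hr1.le)
        _ ≤ x i := key i hi
    have h2 : ((2:ℝ) ^ ((4/3:ℝ)^i)) ^ (((3:ℝ)/4) ^ i) ≤ x i ^ (((3:ℝ)/4) ^ i) :=
      Real.rpow_le_rpow (by positivity) h1 (by positivity)
    calc (2:ℝ) = ((2:ℝ) ^ ((4/3:ℝ)^i)) ^ (((3:ℝ)/4) ^ i) := by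
          rw [← Real.rpow_mul two_pos.le, ← mul_pow]
          norm_num
      _ ≤ x i ^ (((3:ℝ)/4) ^ i) := h2
  have hle : ((2:ℝ):EReal) ≤
      Filter.limsup (fun i : ℕ => ((x i ^ (((3:ℝ)/4) ^ i) : ℝ) : EReal)) Filter.atTop := by
    apply Filter.le_limsup_of_frequently_le'
    apply Filter.Eventually.frequently
    filter_upwards [Filter.eventually_ge_atTop 1] with i hi
    exact_mod_cast hge2 i hi
  have : ((2:ℝ):EReal) ≤ ((1:ℝ):EReal) := by
    refine hle.trans (le_trans hlimsup ?_)
    norm_num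
  rw [EReal.coe_le_coe_iff] at this
  linarith
end
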